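/- Let q be a prime power with q > 2. A linear code over F_q of length q^2-1 and dimension 4 with weights 0, q(q-1)-2, q(q-1)-1, q(q-1), q^2-2, q^2-1 occurring with frequencies 1, (q-1)^2(q^2-q-1), 2(q^2-1)(q-1), q^2-1, (q^2-1)(q-1), 2(q-1) respectively, has a dual code with no codewords of weight 1, 2, or 3, and exactly (q^2-3)(q-1)^2(q-2)^2(q+2)(q+1)/24 codewords of weight 4. -/

import Mathlib

open Module Finset

variable {F : Type} [Field F] [Fintype F] [DecidableEq F]
variable {ι : Type} [Fintype ι] [DecidableEq ι]

lemma toDual_pi (w x : ι → F) :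
    (Pi.basisFun F ι).toDual w x = ∑ i, x i * w i := by
  conv_lhs => rw [← Basis.sum_repr (Pi.basisFun F ι) x]
  simp [← Pi.basisFun_apply, Basis.toDual_eq_repr, Pi.basisFun_repr, mul_comm]

lemma cardsub {F : Type} [Field F] [Fintype F] (V : Type) [AddCommGroup V] [Module F V]
    [Module.Finite F V] : Nat.card V = (Fintype.card F) ^ finrank F V := by
  have : Finite V := Module.finite_iff_finite.mp ‹_›
  have : Fintype V := Fintype.ofFinite V
  rw [Nat.card_eq_fintype_card, card_eq_pow_finrank (K := F)]

lemma core_count (C : Submodule F (ι → F)) (T : Finset ι) :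
    ({v : ι → F | (∀ u ∈ C, ∑ i, v i * u i = 0) ∧ ∀ i ∉ T, v i = 0}).ncard * Nat.card C
      = (Fintype.card F) ^ (T.card) *
        ({u : ι → F | u ∈ C ∧ ∀ i ∈ T, u i = 0}).ncard := by
  classical
  set q := Fintype.card F
  -- linear maps
  set f : C →ₗ[F] (↥T → F) :=
    (LinearMap.funLeft F F (fun i : ↥T => (i : ι))).comp C.subtype with hf
  set W : Submodule F (↥T → F) := LinearMap.range f with hW
  set e := (Pi.basisFun F ↥T).toDualEquiv with he
  set D' : Submodule F (↥T → F) := W.dualAnnihilator.comap e.toLinearMap with hD'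
  have hmemD' : ∀ w : ↥T → F, w ∈ D' ↔ ∀ u ∈ C, ∑ i : ↥T, u (i : ι) * w i = 0 := by
    intro w
    rw [hD', Submodule.mem_comap, Submodule.mem_dualAnnihilator]
    constructor
    · intro h u hu
      have := h (f ⟨u, hu⟩) (LinearMap.mem_range_self f ⟨u, hu⟩)
      simpa [he, Basis.toDualEquiv_apply, toDual_pi, hf, LinearMap.funLeft] using this
    · rintro h _ ⟨⟨u, hu⟩, rfl⟩
      simpa [he, Basis.toDualEquiv_apply, toDual_pi, hf, LinearMap.funLeft] using h u hu
  -- dimension identities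
  have hrankD' : finrank F D' + finrank F W = T.card := by
    have h1 : finrank F D' = finrank F W.dualAnnihilator := by
      rw [hD', Submodule.comap_equiv_eq_map_symm]
      exact LinearEquiv.finrank_map_eq _ _
    have h2 : finrank F ((↥T → F) ⧸ W) = finrank F W.dualAnnihilator :=
      LinearEquiv.finrank_eq (Subspace.quotEquivAnnihilator W)
    have h3 := Submodule.finrank_quotient_add_finrank W
    have h4 : finrank F (↥T → F) = T.card := by
      rw [Module.finrank_fintype_fun_eq_card, Fintype.card_coe]
    omega
  have hrank : finrank F W + finrank F (LinearMap.ker f) = finrank F C :=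
    LinearMap.finrank_range_add_finrank_ker f
  -- D-set equiv
  have eqD : ({v : ι → F | (∀ u ∈ C, ∑ i, v i * u i = 0) ∧ ∀ i ∉ T, v i = 0}).ncard
      = q ^ finrank F D' := by
    rw [← Nat.card_coe_set_eq, ← cardsub (F := F)]
    apply Nat.card_congr
    refine ⟨fun v => ⟨fun i => v.1 (i : ι), ?_⟩, fun w =>
      ⟨fun i => if h : i ∈ T then w.1 ⟨i, h⟩ else 0, ?_⟩, ?_, ?_⟩
    · rw [hmemD']
      intro u hu
      have h1 := v.2.1 u hu
      have h2 := v.2.2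
      calc ∑ i : ↥T, u (i : ι) * v.1 (i : ι) = ∑ i ∈ T, u i * v.1 i :=
            Finset.sum_coe_sort T (fun i => u i * v.1 i)
        _ = ∑ i, u i * v.1 i := Finset.sum_subset (Finset.subset_univ T)
            (fun x _ hx => by rw [h2 x hx, mul_zero])
        _ = ∑ i, v.1 i * u i := Finset.sum_congr rfl fun x _ => mul_comm _ _
        _ = 0 := h1
    · constructor
      · intro u hu
        have hw := (hmemD' w.1).mp w.2 u hu
        calc ∑ i, (if h : i ∈ T then w.1 ⟨i, h⟩ else 0) * u i
            = ∑ i ∈ T, (if h : i ∈ T then w.1 ⟨i, h⟩ else 0) * u i :=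
              (Finset.sum_subset (Finset.subset_univ T)
                (fun x _ hx => by rw [dif_neg hx, zero_mul])).symm
          _ = ∑ i : ↥T, (if h : (i : ι) ∈ T then w.1 ⟨i, h⟩ else 0) * u i :=
              (Finset.sum_coe_sort T _).symm
          _ = ∑ i : ↥T, u (i : ι) * w.1 i := by
              refine Finset.sum_congr rfl fun x _ => ?_
              rw [dif_pos x.2, mul_comm]
          _ = 0 := hw
      · intro i hi
        simp [hi]
    · intro v
      ext i
      by_cases h : i ∈ T
      · simp [dif_pos h]
      · simp [dif_neg h, v.2.2 i h]
    · intro w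
      ext i
      simp [dif_pos i.2]
  -- E-set equiv
  have eqE : ({u : ι → F | u ∈ C ∧ ∀ i ∈ T, u i = 0}).ncard
      = q ^ finrank F (LinearMap.ker f) := by
    rw [← Nat.card_coe_set_eq, ← cardsub (F := F) (LinearMap.ker f)]
    apply Nat.card_congr
    refine ⟨fun u => ⟨⟨u.1, u.2.1⟩, ?_⟩, fun x => ⟨(x.1 : ι → F), (x.1).2, ?_⟩, ?_, ?_⟩
    · rw [LinearMap.mem_ker]
      funext i
      exact u.2.2 i i.2
    · intro i hi
      have hx : f x.1 = 0 := x.2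
      exact congrFun hx ⟨i, hi⟩
    · intro u; rfl
    · intro x; rfl
  have hC := cardsub (F := F) ↥C
  rw [eqD]
  rw [eqE]
  rw [hC]
  rw [← pow_add, ← pow_add]
  have : finrank F D' + finrank F C = T.card + finrank F (LinearMap.ker f) := by
    clear eqD eqE hC hmemD'
    omega
  rw [this]

lemma card_supersets {ι : Type} [DecidableEq ι] [Fintype ι] (s : Finset ι) (t : ℕ) :
    ((Finset.univ.powersetCard t).filter (fun T => s ⊆ T)).card
      = if s.card ≤ t then (Fintype.card ι - s.card).choose (t - s.card) else 0 := by
  split_ifs with h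
  · rw [← Finset.card_compl s, ← Finset.card_powersetCard]
    have hcs : ∀ T ∈ (Finset.univ.powersetCard t).filter (fun T => s ⊆ T),
        T.card = t ∧ s ⊆ T := by
      intro T hT
      rw [Finset.mem_filter, Finset.mem_powersetCard] at hT
      exact ⟨hT.1.2, hT.2⟩
    refine Finset.card_bij' (fun T _ => T \ s) (fun U _ => U ∪ s) ?_ ?_ ?_ ?_
    · intro T hT
      obtain ⟨hc, hs⟩ := hcs T hT
      rw [Finset.mem_powersetCard]
      constructor
      · intro x hx
        rw [Finset.mem_compl]
        exact (Finset.mem_sdiff.mp hx).2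
      · rw [Finset.card_sdiff_of_subset hs, hc]
    · intro U hU
      rw [Finset.mem_powersetCard] at hU
      rw [Finset.mem_filter, Finset.mem_powersetCard]
      have hd : Disjoint U s := by
        refine Finset.disjoint_left.mpr fun x hx hxs => ?_
        have := hU.1 hx
        rw [Finset.mem_compl] at this
        exact this hxs
      refine ⟨⟨Finset.subset_univ _, ?_⟩, Finset.subset_union_right⟩
      rw [Finset.card_union_of_disjoint hd, hU.2]
      omega
    · intro T hT
      exact Finset.sdiff_union_of_subset (hcs T hT).2
    · intro U hU
      rw [Finset.mem_powersetCard] at hU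
      apply Finset.union_sdiff_cancel_right
      refine Finset.disjoint_left.mpr fun x hx hxs => ?_
      have := hU.1 hx
      rw [Finset.mem_compl] at this
      exact this hxs
  · rw [Finset.card_eq_zero, Finset.filter_eq_empty_iff]
    intro T hT
    rw [Finset.mem_powersetCard] at hT
    intro hs
    exact h (hT.2 ▸ Finset.card_le_card hs)

lemma filter_subsets {ι : Type} [DecidableEq ι] [Fintype ι] (s : Finset ι) (t : ℕ) :
    (Finset.univ.powersetCard t).filter (fun T => T ⊆ s) = s.powersetCard t := by
  ext T
  simp only [Finset.mem_filter, Finset.mem_powersetCard]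
  constructor
  · rintro ⟨⟨-, hc⟩, hs⟩; exact ⟨hs, hc⟩
  · rintro ⟨hs, hc⟩; exact ⟨⟨Finset.subset_univ _, hc⟩, hs⟩

lemma chooseK (m k : ℕ) : m.choose k * k.factorial = m.descFactorial k := by
  rw [Nat.descFactorial_eq_factorial_mul_choose, mul_comm]

lemma choose2 (m : ℕ) : m.choose 2 * 2 = m * (m - 1) := by
  have := chooseK m 2
  simp only [Nat.descFactorial_succ, Nat.descFactorial_zero, Nat.factorial] at this
  rw [show (2:ℕ) = 2*1 from rfl, this]
  simp [Nat.sub_zero]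
  ring

lemma choose3 (m : ℕ) : m.choose 3 * 6 = m * (m - 1) * (m - 2) := by
  have := chooseK m 3
  simp only [Nat.descFactorial_succ, Nat.descFactorial_zero, Nat.factorial] at this
  rw [show (6:ℕ) = 3*(2*1) from rfl, this]
  simp [Nat.sub_zero]
  ring

lemma choose4 (m : ℕ) : m.choose 4 * 24 = m * (m - 1) * (m - 2) * (m - 3) := by
  have := chooseK m 4
  simp only [Nat.descFactorial_succ, Nat.descFactorial_zero, Nat.factorial] at this
  rw [show (24:ℕ) = 4*(3*(2*1)) from rfl, this]
  simp [Nat.sub_zero]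
  ring

lemma hammingNorm_eq_card {F : Type} [DecidableEq F] [Zero F] {ι : Type} [Fintype ι]
    (v : ι → F) : hammingNorm v = (Finset.univ.filter (fun i => v i ≠ 0)).card := by
  simp [hammingNorm]

lemma master_count {F : Type} [Field F] [Fintype F] [DecidableEq F] {ι : Type} [Fintype ι]
    [DecidableEq ι] (C : Submodule F (ι → F)) [DecidablePred (· ∈ C)]
    (t : ℕ) (ht : t ≤ Fintype.card ι) :
    Nat.card C * ∑ j ∈ Finset.range (t+1),
        ({v : ι → F | (∀ u ∈ C, ∑ i, v i * u i = 0) ∧ hammingNorm v = j}).ncard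
          * ((Fintype.card ι - j).choose (t - j))
      = (Fintype.card F)^t *
        ∑ u ∈ Finset.univ.filter (· ∈ C), ((Fintype.card ι - hammingNorm u).choose t) := by
  classical
  set n := Fintype.card ι with hn
  set q := Fintype.card F with hq
  set P := (Finset.univ : Finset ι).powersetCard t with hP
  have hTcard : ∀ T ∈ P, T.card = t := fun T hT => (Finset.mem_powersetCard.mp hT).2
  set dP : (ι → F) → Prop := fun v => ∀ u ∈ C, ∑ i, v i * u i = 0 with hdP
  set Dfin := Finset.univ.filter dP with hDfin
  set Cfin := Finset.univ.filter (· ∈ C) with hCfin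
  have sumEq : ∑ T ∈ P, ({v : ι → F | dP v ∧ ∀ i ∉ T, v i = 0}).ncard * Nat.card C
      = ∑ T ∈ P, q ^ t * ({u : ι → F | u ∈ C ∧ ∀ i ∈ T, u i = 0}).ncard :=
    Finset.sum_congr rfl fun T hT => by rw [core_count C T, hTcard T hT]
  have ncardD : ∀ Q : (ι → F) → Prop, ∀ _ : DecidablePred Q,
      ({v : ι → F | dP v ∧ Q v}).ncard = (Dfin.filter Q).card := by
    intro Q _
    rw [← Set.ncard_coe_finset]
    congr 1
    ext v
    simp [hDfin, Finset.mem_filter]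
  have ncardC : ∀ Q : (ι → F) → Prop, ∀ _ : DecidablePred Q,
      ({u : ι → F | u ∈ C ∧ Q u}).ncard = (Cfin.filter Q).card := by
    intro Q _
    rw [← Set.ncard_coe_finset]
    congr 1
    ext v
    simp [hCfin, Finset.mem_filter]
  -- LHS evaluation
  have suppcount : ∀ v : ι → F, (P.filter (fun T => ∀ i ∉ T, v i = 0)).card
      = if hammingNorm v ≤ t then (n - hammingNorm v).choose (t - hammingNorm v) else 0 := by
    intro v
    have hsupp : ∀ T ∈ P, (∀ i ∉ T, v i = 0) ↔
        (Finset.univ.filter (fun i => v i ≠ 0)) ⊆ T := by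
      intro T _
      constructor
      · intro h i hi
        rw [Finset.mem_filter] at hi
        by_contra hiT
        exact hi.2 (h i hiT)
      · intro h i hiT
        by_contra hvi
        exact hiT (h (Finset.mem_filter.mpr ⟨Finset.mem_univ _, hvi⟩))
    rw [Finset.filter_congr hsupp, hP, card_supersets, ← hammingNorm_eq_card, ← hn]
  have lhs2 : ∑ v ∈ Dfin,
        (if hammingNorm v ≤ t then (n - hammingNorm v).choose (t - hammingNorm v) else 0)
      = ∑ j ∈ Finset.range (t+1),
        (Dfin.filter (fun v => hammingNorm v = j)).card * ((n - j).choose (t - j)) := by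
    set c : ℕ → ℕ := fun j => if j ≤ t then (n - j).choose (t - j) else 0 with hc
    have hmaps : ∀ v ∈ Dfin, hammingNorm v ∈ Finset.range (n + 1) := by
      intro v _
      rw [Finset.mem_range, hammingNorm_eq_card]
      have := Finset.card_filter_le (Finset.univ : Finset ι) (fun i => v i ≠ 0)
      rw [Finset.card_univ] at this
      exact Nat.lt_succ_of_le this
    rw [show (fun v => if hammingNorm v ≤ t then
        (n - hammingNorm v).choose (t - hammingNorm v) else 0) = fun v => c (hammingNorm v)
      from rfl]
    rw [← Finset.sum_fiberwise_of_maps_to hmaps (fun v => c (hammingNorm v))]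
    have inner : ∀ j, ∑ v ∈ Dfin.filter (fun v => hammingNorm v = j), c (hammingNorm v)
        = (Dfin.filter (fun v => hammingNorm v = j)).card * c j := by
      intro j
      rw [Finset.sum_congr rfl (fun v hv => by rw [(Finset.mem_filter.mp hv).2]),
        Finset.sum_const, smul_eq_mul]
    rw [Finset.sum_congr rfl fun j _ => inner j]
    rw [← Finset.sum_subset (Finset.range_subset_range.mpr (Nat.succ_le_succ ht))
      (fun j _ hj => by
        have hjt : ¬ j ≤ t := fun hle => hj (Finset.mem_range.mpr (Nat.lt_succ_of_le hle))
        simp [hc, hjt])]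
    refine Finset.sum_congr rfl fun j hj => ?_
    have hjt : j ≤ t := Nat.lt_succ_iff.mp (Finset.mem_range.mp hj)
    simp [hc, hjt]
  -- RHS evaluation
  have rhs2 : ∑ T ∈ P, (Cfin.filter (fun u => ∀ i ∈ T, u i = 0)).card
      = ∑ u ∈ Cfin, ((n - hammingNorm u).choose t) := by
    simp_rw [Finset.card_filter]
    rw [Finset.sum_comm]
    refine Finset.sum_congr rfl fun u _ => ?_
    rw [← Finset.card_filter]
    have hsub : ∀ T ∈ P, (∀ i ∈ T, u i = 0) ↔
        T ⊆ (Finset.univ.filter (fun i => u i ≠ 0))ᶜ := by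
      intro T _
      constructor
      · intro h i hi
        rw [Finset.mem_compl, Finset.mem_filter]
        push_neg
        intro _
        exact h i hi
      · intro h i hi
        have := h hi
        rw [Finset.mem_compl, Finset.mem_filter] at this
        push_neg at this
        exact this (Finset.mem_univ _)
    rw [Finset.filter_congr hsub, hP, filter_subsets, Finset.card_powersetCard,
      Finset.card_compl, ← hammingNorm_eq_card, ← hn]
  -- assemble
  have L0 : ∑ T ∈ P, ({v : ι → F | dP v ∧ ∀ i ∉ T, v i = 0}).ncard
      = ∑ j ∈ Finset.range (t+1),
        ({v : ι → F | dP v ∧ hammingNorm v = j}).ncard * ((n - j).choose (t - j)) := by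
    have e1 : ∀ T : Finset ι, ({v : ι → F | dP v ∧ ∀ i ∉ T, v i = 0}).ncard
        = (Dfin.filter (fun v => ∀ i ∉ T, v i = 0)).card := fun T => ncardD _ inferInstance
    calc ∑ T ∈ P, ({v : ι → F | dP v ∧ ∀ i ∉ T, v i = 0}).ncard
        = ∑ T ∈ P, ∑ v ∈ Dfin, (if (∀ i ∉ T, v i = 0) then 1 else 0) := by
          refine Finset.sum_congr rfl fun T _ => ?_
          rw [e1 T, Finset.card_filter]
      _ = ∑ v ∈ Dfin, ∑ T ∈ P, (if (∀ i ∉ T, v i = 0) then 1 else 0) := Finset.sum_comm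
      _ = ∑ v ∈ Dfin, (if hammingNorm v ≤ t then
            (n - hammingNorm v).choose (t - hammingNorm v) else 0) := by
          refine Finset.sum_congr rfl fun v _ => ?_
          rw [← Finset.card_filter, suppcount v]
      _ = _ := by
          rw [lhs2]
          refine Finset.sum_congr rfl fun j _ => ?_
          rw [ncardD (fun v => hammingNorm v = j) inferInstance]
  have R0 : ∑ T ∈ P, ({u : ι → F | u ∈ C ∧ ∀ i ∈ T, u i = 0}).ncard
      = ∑ u ∈ Cfin, ((n - hammingNorm u).choose t) := by
    rw [← rhs2]
    exact Finset.sum_congr rfl fun T _ => ncardC _ inferInstance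
  calc Nat.card C * ∑ j ∈ Finset.range (t+1),
        ({v : ι → F | dP v ∧ hammingNorm v = j}).ncard * ((n - j).choose (t - j))
      = (∑ T ∈ P, ({v : ι → F | dP v ∧ ∀ i ∉ T, v i = 0}).ncard) * Nat.card C := by
        rw [L0, mul_comm]
    _ = ∑ T ∈ P, ({v : ι → F | dP v ∧ ∀ i ∉ T, v i = 0}).ncard * Nat.card C :=
        Finset.sum_mul _ _ _
    _ = ∑ T ∈ P, q ^ t * ({u : ι → F | u ∈ C ∧ ∀ i ∈ T, u i = 0}).ncard := sumEq
    _ = q ^ t * ∑ T ∈ P, ({u : ι → F | u ∈ C ∧ ∀ i ∈ T, u i = 0}).ncard :=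
        (Finset.mul_sum _ _ _).symm
    _ = q ^ t * ∑ u ∈ Cfin, ((n - hammingNorm u).choose t) := by rw [R0]

/-- Let `C` be a linear code over `F_q` (`q > 2`) of length `q²-1`, dimension `4`, whose
weights `0, q(q-1)-2, q(q-1)-1, q(q-1), q²-2, q²-1` occur with frequencies
`1, (q-1)²(q²-q-1), 2(q²-1)(q-1), q²-1, (q²-1)(q-1), 2(q-1)`.  Then its dual code has no
codewords of weight `1`, `2` or `3`, and exactly `(q²-3)(q-1)²(q-2)²(q+2)(q+1)/24`
codewords of weight `4`. -/
theorem dual_code_weights (q : ℕ) (hq : 2 < q)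
    (hppow : ∃ (p n : ℕ), p.Prime ∧ 0 < n ∧ q = p ^ n)
    (F : Type) [Field F] [Fintype F] [DecidableEq F] (hF : Fintype.card F = q)
    (C : Submodule F (Fin (q ^ 2 - 1) → F)) (hdim : Module.finrank F C = 4)
    (h0 : Set.ncard {v : Fin (q ^ 2 - 1) → F | v ∈ C ∧ hammingNorm v = 0} = 1)
    (h1 : Set.ncard {v : Fin (q ^ 2 - 1) → F | v ∈ C ∧ hammingNorm v = q * (q - 1) - 2} =
      (q - 1) ^ 2 * (q ^ 2 - q - 1))
    (h2 : Set.ncard {v : Fin (q ^ 2 - 1) → F | v ∈ C ∧ hammingNorm v = q * (q - 1) - 1} =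
      2 * (q ^ 2 - 1) * (q - 1))
    (h3 : Set.ncard {v : Fin (q ^ 2 - 1) → F | v ∈ C ∧ hammingNorm v = q * (q - 1)} =
      q ^ 2 - 1)
    (h4 : Set.ncard {v : Fin (q ^ 2 - 1) → F | v ∈ C ∧ hammingNorm v = q ^ 2 - 2} =
      (q ^ 2 - 1) * (q - 1))
    (h5 : Set.ncard {v : Fin (q ^ 2 - 1) → F | v ∈ C ∧ hammingNorm v = q ^ 2 - 1} =
      2 * (q - 1))
    (honly : ∀ v ∈ C, hammingNorm v ∈
      ({0, q * (q - 1) - 2, q * (q - 1) - 1, q * (q - 1), q ^ 2 - 2, q ^ 2 - 1} : Set ℕ)) :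
    (∀ v : Fin (q ^ 2 - 1) → F, (∀ u ∈ C, ∑ i, v i * u i = 0) →
        hammingNorm v ≠ 1 ∧ hammingNorm v ≠ 2 ∧ hammingNorm v ≠ 3) ∧
      Set.ncard {v : Fin (q ^ 2 - 1) → F |
          (∀ u ∈ C, ∑ i, v i * u i = 0) ∧ hammingNorm v = 4} * 24 =
        (q ^ 2 - 3) * (q - 1) ^ 2 * (q - 2) ^ 2 * (q + 2) * (q + 1) := by
  classical
  have hq3 : 3 ≤ q := hq
  have hq9 : 9 ≤ q ^ 2 := by
    calc (9:ℕ) = 3*3 := rfl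
      _ ≤ q*q := Nat.mul_le_mul hq3 hq3
      _ = q^2 := (sq q).symm
  have hqq : q * (q-1) + q = q^2 := by
    have h1' : q - 1 + 1 = q := by omega
    calc q*(q-1) + q = q * ((q-1)+1) := (Nat.mul_succ q (q-1)).symm
      _ = q * q := by rw [h1']
      _ = q^2 := (sq q).symm
  have hq6 : 6 ≤ q * (q-1) := by
    calc (6:ℕ) = 3*2 := rfl
      _ ≤ q*(q-1) := Nat.mul_le_mul hq3 (by omega)
  set Cfin : Finset (Fin (q^2-1) → F) := Finset.univ.filter (· ∈ C) with hCfin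
  have hA : ∀ w : ℕ, ({v : Fin (q^2-1) → F | v ∈ C ∧ hammingNorm v = w}).ncard
      = (Cfin.filter (fun v => hammingNorm v = w)).card := by
    intro w
    rw [← Set.ncard_coe_finset]
    congr 1
    ext v
    simp [hCfin]
  have hcardC : Nat.card ↥C = q ^ 4 := by
    rw [cardsub (F := F) ↥C, hdim, hF]
  -- sum over codewords
  have S_eval : ∀ t : ℕ, ∑ u ∈ Cfin, (((q^2-1) - hammingNorm u).choose t)
      = (q^2-1).choose t + (q-1)^2*(q^2-q-1) * ((q+1).choose t)
        + 2*(q^2-1)*(q-1) * (q.choose t) + (q^2-1) * ((q-1).choose t)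
        + (q^2-1)*(q-1) * (Nat.choose 1 t) + 2*(q-1) * (Nat.choose 0 t) := by
    intro t
    set W6 : Finset ℕ := {0, q*(q-1)-2, q*(q-1)-1, q*(q-1), q^2-2, q^2-1} with hW6
    have hmaps : ∀ u ∈ Cfin, hammingNorm u ∈ W6 := by
      intro u hu
      have hm : u ∈ C := by simpa [hCfin] using hu
      have := honly u hm
      simp only [Set.mem_insert_iff, Set.mem_singleton_iff] at this
      simp only [hW6, Finset.mem_insert, Finset.mem_singleton]
      exact this
    have fib := Finset.sum_fiberwise_of_maps_to hmaps
      (fun u => ((q^2-1) - hammingNorm u).choose t)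
    rw [← fib]
    have inner : ∀ w : ℕ, ∑ u ∈ Cfin.filter (fun u => hammingNorm u = w),
        (((q^2-1) - hammingNorm u).choose t)
        = (Cfin.filter (fun u => hammingNorm u = w)).card * (((q^2-1) - w).choose t) := by
      intro w
      rw [Finset.sum_congr rfl (fun u hu => by rw [(Finset.mem_filter.mp hu).2]),
        Finset.sum_const, smul_eq_mul]
    rw [Finset.sum_congr rfl fun w _ => inner w]
    have d1 : (0:ℕ) ∉ ({q*(q-1)-2, q*(q-1)-1, q*(q-1), q^2-2, q^2-1} : Finset ℕ) := by
      simp only [Finset.mem_insert, Finset.mem_singleton]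
      omega
    have d2 : q*(q-1)-2 ∉ ({q*(q-1)-1, q*(q-1), q^2-2, q^2-1} : Finset ℕ) := by
      simp only [Finset.mem_insert, Finset.mem_singleton]
      omega
    have d3 : q*(q-1)-1 ∉ ({q*(q-1), q^2-2, q^2-1} : Finset ℕ) := by
      simp only [Finset.mem_insert, Finset.mem_singleton]
      omega
    have d4 : q*(q-1) ∉ ({q^2-2, q^2-1} : Finset ℕ) := by
      simp only [Finset.mem_insert, Finset.mem_singleton]
      omega
    have d5 : q^2-2 ∉ ({q^2-1} : Finset ℕ) := by
      simp only [Finset.mem_singleton]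
      omega
    rw [hW6, Finset.sum_insert d1, Finset.sum_insert d2, Finset.sum_insert d3,
      Finset.sum_insert d4, Finset.sum_insert d5, Finset.sum_singleton]
    have c0 : (Cfin.filter (fun u => hammingNorm u = 0)).card = 1 := by rw [← hA]; exact h0
    have c1 : (Cfin.filter (fun u => hammingNorm u = q*(q-1)-2)).card
        = (q-1)^2*(q^2-q-1) := by rw [← hA]; exact h1
    have c2 : (Cfin.filter (fun u => hammingNorm u = q*(q-1)-1)).card
        = 2*(q^2-1)*(q-1) := by rw [← hA]; exact h2
    have c3 : (Cfin.filter (fun u => hammingNorm u = q*(q-1))).card = q^2-1 := by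
      rw [← hA]; exact h3
    have c4 : (Cfin.filter (fun u => hammingNorm u = q^2-2)).card = (q^2-1)*(q-1) := by
      rw [← hA]; exact h4
    have c5 : (Cfin.filter (fun u => hammingNorm u = q^2-1)).card = 2*(q-1) := by
      rw [← hA]; exact h5
    rw [c0, c1, c2, c3, c4, c5]
    have s1 : (q^2-1) - (q*(q-1)-2) = q+1 := by omega
    have s2 : (q^2-1) - (q*(q-1)-1) = q := by omega
    have s3 : (q^2-1) - (q*(q-1)) = q - 1 := by omega
    have s4 : (q^2-1) - (q^2-2) = 1 := by omega
    have s5 : (q^2-1) - (q^2-1) = 0 := by omega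
    rw [s1, s2, s3, s4, s5, Nat.sub_zero, one_mul]
    ring
  -- master equations
  have M : ∀ t : ℕ, t ≤ 4 →
      q^4 * ∑ j ∈ Finset.range (t+1),
        ({v : Fin (q^2-1) → F | (∀ u ∈ C, ∑ i, v i * u i = 0) ∧ hammingNorm v = j}).ncard
          * (((q^2-1) - j).choose (t - j))
      = q^t * ∑ u ∈ Cfin, (((q^2-1) - hammingNorm u).choose t) := by
    intro t ht
    have hle : t ≤ Fintype.card (Fin (q^2-1)) := by
      rw [Fintype.card_fin]
      omega
    have := master_count C t hle
    rwa [Fintype.card_fin, hF, hcardC] at this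
  have hq4pos : (0:ℕ) < q ^ 4 := by positivity
  have hB0 : ({v : Fin (q^2-1) → F | (∀ u ∈ C, ∑ i, v i * u i = 0) ∧ hammingNorm v = 0}).ncard
      = 1 := by
    have hset : {v : Fin (q^2-1) → F | (∀ u ∈ C, ∑ i, v i * u i = 0) ∧ hammingNorm v = 0}
        = {0} := by
      ext v
      simp only [Set.mem_setOf_eq, Set.mem_singleton_iff, hammingNorm_eq_zero]
      constructor
      · rintro ⟨-, h⟩; exact h
      · rintro rfl
        exact ⟨fun u hu => by simp, rfl⟩
    rw [hset, Set.ncard_singleton]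
  obtain ⟨B1, hB1d⟩ : ∃ x, ({v : Fin (q^2-1) → F |
      (∀ u ∈ C, ∑ i, v i * u i = 0) ∧ hammingNorm v = 1}).ncard = x := ⟨_, rfl⟩
  obtain ⟨B2, hB2d⟩ : ∃ x, ({v : Fin (q^2-1) → F |
      (∀ u ∈ C, ∑ i, v i * u i = 0) ∧ hammingNorm v = 2}).ncard = x := ⟨_, rfl⟩
  obtain ⟨B3, hB3d⟩ : ∃ x, ({v : Fin (q^2-1) → F |
      (∀ u ∈ C, ∑ i, v i * u i = 0) ∧ hammingNorm v = 3}).ncard = x := ⟨_, rfl⟩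
  obtain ⟨B4, hB4d⟩ : ∃ x, ({v : Fin (q^2-1) → F |
      (∀ u ∈ C, ∑ i, v i * u i = 0) ∧ hammingNorm v = 4}).ncard = x := ⟨_, rfl⟩
  -- step 1
  have M1 := M 1 (by norm_num)
  rw [S_eval 1] at M1
  simp only [Finset.sum_range_succ, Finset.sum_range_zero, zero_add] at M1
  rw [hB0, hB1d] at M1
  norm_num at M1
  have cond1 : 1 ≤ q := by clear * - hq3; omega
  have cond2 : 2 ≤ q := by clear * - hq3; omega
  have cond3 : 1 ≤ q^2 := by clear * - hq9; omega
  have cond4 : 2 ≤ q^2 := by clear * - hq9; omega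
  have cond5 : 3 ≤ q^2 := by clear * - hq9; omega
  have cond6 : q ≤ q^2 := by clear * - hq9 hqq hq6; omega
  have cond7 : 1 ≤ q^2 - q := by clear * - hq9 hqq hq6; omega
  have cond8 : 1 ≤ q^2 - 1 := by clear * - hq9; omega
  have cond9 : 2 ≤ q^2 - 1 := by clear * - hq9; omega
  have cond10 : 3 ≤ q^2 - 1 := by clear * - hq9; omega
  have hB1 : B1 = 0 := by
    zify [Nat.add_sub_cancel, cond1, cond2, cond3, cond4, cond5, cond6, cond7, cond8] at M1 ⊢
    have hz : (B1 : ℤ) * q^4 = 0 := by linear_combination M1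
    rcases mul_eq_zero.mp hz with h | h
    · exact h
    · exact absurd h (by positivity)
  have cond11 : 1 ≤ q - 1 := by clear * - hq3; omega
  have cond12 : 2 ≤ q - 1 := by clear * - hq3; omega
  have sc1 : q + 1 - 2 = q - 1 := by clear * - hq3; omega
  have sc2 : q + 1 - 3 = q - 2 := by clear * - hq3; omega
  -- step 2
  have M2 := M 2 (by norm_num)
  rw [S_eval 2] at M2
  simp only [Finset.sum_range_succ, Finset.sum_range_zero, zero_add] at M2
  rw [hB0, hB1d, hB2d, hB1] at M2
  norm_num [show Nat.choose 1 2 = 0 from rfl, show Nat.choose 0 2 = 0 from rfl] at M2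
  have hB2 : B2 = 0 := by
    have e0 := choose2 (q^2-1)
    have e1 := choose2 (q+1)
    have e2 := choose2 q
    have e3 := choose2 (q-1)
    zify [Nat.add_sub_cancel, cond1, cond2, cond3, cond4, cond5, cond6, cond7, cond8, cond9, cond11]
      at M2 e0 e1 e2 e3 ⊢
    have hz : (B2 : ℤ) * q^4 * 2 = 0 := by
      linear_combination 2*M2 + ((q:ℤ)^2 - q^4)*e0 + (q:ℤ)^2*(((q:ℤ)-1)^2*((q:ℤ)^2-q-1))*e1
        + (q:ℤ)^2*(2*((q:ℤ)^2-1)*((q:ℤ)-1))*e2 + (q:ℤ)^2*((q:ℤ)^2-1)*e3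
    rcases mul_eq_zero.mp hz with h | h
    · rcases mul_eq_zero.mp h with h' | h'
      · exact_mod_cast h'
      · exact absurd h' (by positivity)
    · norm_num at h
  -- step 3
  have M3 := M 3 (by norm_num)
  rw [S_eval 3] at M3
  simp only [Finset.sum_range_succ, Finset.sum_range_zero, zero_add] at M3
  rw [hB0, hB1d, hB2d, hB3d, hB1, hB2] at M3
  norm_num [show Nat.choose 1 3 = 0 from rfl, show Nat.choose 0 3 = 0 from rfl] at M3
  have hB3 : B3 = 0 := by
    have e0 := choose3 (q^2-1)
    have e1 := choose3 (q+1)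
    have e2 := choose3 q
    have e3 := choose3 (q-1)
    zify [Nat.add_sub_cancel, cond1, cond2, cond3, cond4, cond5, cond6, cond7, cond8, cond9, cond10,
      cond11, cond12, sc1, sc2, show 3 ≤ q from hq3] at M3 e0 e1 e2 e3 ⊢
    have hz : (B3 : ℤ) * q^4 * 6 = 0 := by
      linear_combination 6*M3 + ((q:ℤ)^3 - q^4)*e0 + (q:ℤ)^3*(((q:ℤ)-1)^2*((q:ℤ)^2-q-1))*e1
        + (q:ℤ)^3*(2*((q:ℤ)^2-1)*((q:ℤ)-1))*e2 + (q:ℤ)^3*((q:ℤ)^2-1)*e3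
    rcases mul_eq_zero.mp hz with h | h
    · rcases mul_eq_zero.mp h with h' | h'
      · exact_mod_cast h'
      · exact absurd h' (by positivity)
    · norm_num at h
  -- step 4
  have M4 := M 4 (by norm_num)
  rw [S_eval 4] at M4
  simp only [Finset.sum_range_succ, Finset.sum_range_zero, zero_add] at M4
  rw [hB0, hB1d, hB2d, hB3d, hB4d, hB1, hB2, hB3] at M4
  norm_num [show Nat.choose 1 4 = 0 from rfl, show Nat.choose 0 4 = 0 from rfl] at M4
  have M4' := M4.resolve_right (by clear * - hq3; omega)
  have hB4 : B4 * 24 = (q ^ 2 - 3) * (q - 1) ^ 2 * (q - 2) ^ 2 * (q + 2) * (q + 1) := by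
    rcases Nat.lt_or_ge q 4 with hq4 | hq4
    · have hq3' : q = 3 := by clear * - hq3 hq4; omega
      subst hq3'
      norm_num [show Nat.choose 8 4 = 70 from rfl, show Nat.choose 4 4 = 1 from rfl,
        show Nat.choose 3 4 = 0 from rfl, show Nat.choose 2 4 = 0 from rfl] at M4' ⊢
      clear * - M4'
      omega
    · have cond13 : 3 ≤ q - 1 := by clear * - hq4; omega
      have e1 := choose4 (q+1)
      have e2 := choose4 q
      have e3 := choose4 (q-1)
      zify [Nat.add_sub_cancel, cond1, cond2, cond3, cond4, cond5, cond6, cond7, cond8, cond9, cond10,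
        cond11, cond12, cond13, sc1, sc2, show 3 ≤ q from hq3, show 4 ≤ q from hq4]
        at M4' e1 e2 e3 ⊢
      linear_combination 24*M4' + (((q:ℤ)-1)^2*((q:ℤ)^2-q-1))*e1
        + (2*((q:ℤ)^2-1)*((q:ℤ)-1))*e2 + ((q:ℤ)^2-1)*e3
  -- conclusion
  have hempty : ∀ (j B : ℕ), ({v : Fin (q^2-1) → F |
      (∀ u ∈ C, ∑ i, v i * u i = 0) ∧ hammingNorm v = j}).ncard = B → B = 0 →
      ∀ v : Fin (q^2-1) → F, (∀ u ∈ C, ∑ i, v i * u i = 0) → hammingNorm v ≠ j := by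
    intro j B hd hB v hv hwt
    rw [hB] at hd
    have hemp := (Set.ncard_eq_zero (Set.toFinite _)).mp hd
    have : v ∈ {v : Fin (q^2-1) → F |
        (∀ u ∈ C, ∑ i, v i * u i = 0) ∧ hammingNorm v = j} := ⟨hv, hwt⟩
    rw [hemp] at this
    exact this
  constructor
  · intro v hv
    exact ⟨hempty 1 B1 hB1d hB1 v hv, hempty 2 B2 hB2d hB2 v hv, hempty 3 B3 hB3d hB3 v hv⟩
  · rw [hB4d]
    exact hB4
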